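/- Every finite-dimensional local associative unital ℂ-algebra of dimension at most 3 is isomorphic to one of: ℂ[x]/(xⁱ) for 1 ≤ i ≤ 3, or ℂ[x,y]/(x,y)². -/

import Mathlib

open Polynomial

section Aux

variable {S : Type} [Ring S] [Algebra ℂ S]

lemma aux_mul_eq_one_comm [FiniteDimensional ℂ S] {a b : S} (h : a * b = 1) : b * a = 1 := by
  have hsurj : Function.Surjective (LinearMap.mulLeft ℂ a) := fun c =>
    ⟨b * c, by simp [LinearMap.mulLeft_apply, ← mul_assoc, h]⟩
  have hinj : Function.Injective (LinearMap.mulLeft ℂ a) :=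
    (LinearMap.injective_iff_surjective).mpr hsurj
  have h2 : a * (b * a) = a * 1 := by rw [← mul_assoc, h, one_mul, mul_one]
  exact hinj (show LinearMap.mulLeft ℂ a (b * a) = LinearMap.mulLeft ℂ a 1 by
    simpa [LinearMap.mulLeft_apply] using h2)

lemma aux_isUnit_left [FiniteDimensional ℂ S] {a b : S} (h : a * b = 1) : IsUnit a :=
  ⟨⟨a, b, h, aux_mul_eq_one_comm h⟩, rfl⟩

lemma aux_isUnit_right [FiniteDimensional ℂ S] {a b : S} (h : a * b = 1) : IsUnit b :=
  ⟨⟨b, a, aux_mul_eq_one_comm h, h⟩, rfl⟩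

lemma aux_nonunit_mul_left [FiniteDimensional ℂ S] (s : S) {a : S} (ha : ¬IsUnit a) :
    ¬IsUnit (s * a) := by
  rintro ⟨u, hu⟩
  have h : ((u⁻¹ : Sˣ) : S) * s * a = 1 := by rw [mul_assoc, ← hu]; exact u.inv_mul
  exact ha (aux_isUnit_right h)

lemma aux_nonunit_mul_right [FiniteDimensional ℂ S] (s : S) {a : S} (ha : ¬IsUnit a) :
    ¬IsUnit (a * s) := by
  rintro ⟨u, hu⟩
  have h : a * (s * ((u⁻¹ : Sˣ) : S)) = 1 := by rw [← mul_assoc, ← hu]; exact u.mul_inv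
  exact ha (aux_isUnit_left h)

variable [IsLocalRing S]

omit [Algebra ℂ S] in
lemma aux_unit_cancel_right {z : S} (u : Sˣ) (h : z * (u : S) = 0) : z = 0 := by
  have h2 := congrArg (· * ((u⁻¹ : Sˣ) : S)) h
  simpa [mul_assoc, u.mul_inv] using h2

omit [Algebra ℂ S] in
lemma aux_unit_cancel_left {z : S} (u : Sˣ) (h : (u : S) * z = 0) : z = 0 := by
  have h2 := congrArg (((u⁻¹ : Sˣ) : S) * ·) h
  simpa [← mul_assoc, u.inv_mul] using h2

lemma aux_nonunits_add {a b : S} (ha : ¬IsUnit a) (hb : ¬IsUnit b) : ¬IsUnit (a + b) := by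
  rintro ⟨u, hu⟩
  have h1 : ((u⁻¹ : Sˣ) : S) * a + ((u⁻¹ : Sˣ) : S) * b = 1 := by
    rw [← mul_add, ← hu]; exact u.inv_mul
  rcases IsLocalRing.isUnit_or_isUnit_of_add_one h1 with h | h
  · refine ha ?_
    have := u.isUnit.mul h
    rwa [← mul_assoc, u.mul_inv, one_mul] at this
  · refine hb ?_
    have := u.isUnit.mul h
    rwa [← mul_assoc, u.mul_inv, one_mul] at this

lemma aux_nonunit_smul [FiniteDimensional ℂ S] (c : ℂ) {a : S} (ha : ¬IsUnit a) :
    ¬IsUnit (c • a) := by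
  rw [Algebra.smul_def]; exact aux_nonunit_mul_left _ ha

lemma aux_isUnit_algebraMap {c : ℂ} (hc : c ≠ 0) : IsUnit (algebraMap ℂ S c) :=
  (isUnit_iff_ne_zero.mpr hc).map (algebraMap ℂ S)

/-- a nonunit minus a nonzero scalar is a unit -/
lemma aux_unit_sub [FiniteDimensional ℂ S] {x : S} (hx : ¬IsUnit x) {c : ℂ} (hc : c ≠ 0) :
    IsUnit (x - algebraMap ℂ S c) := by
  by_contra hnu
  have h2 : ¬IsUnit (-(x - algebraMap ℂ S c) + x) :=
    aux_nonunits_add (fun h => hnu (by simpa using h.neg)) hx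
  have h3 : -(x - algebraMap ℂ S c) + x = algebraMap ℂ S c := by
    rw [neg_sub, sub_add_cancel]
  rw [h3] at h2
  exact h2 (aux_isUnit_algebraMap hc)

lemma aux_sq_eq_smul [FiniteDimensional ℂ S] {x : S} (hx : ¬IsUnit x) {c : ℂ}
    (h : x * x = c • x) (hc : c ≠ 0) : x = 0 := by
  have hu : IsUnit (x - algebraMap ℂ S c) := aux_unit_sub hx hc
  have hz : x * (x - algebraMap ℂ S c) = 0 := by
    rw [mul_sub, h, ← Algebra.commutes c x, ← Algebra.smul_def, sub_self]
  rcases hu with ⟨u, hu⟩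
  have h4 := congrArg (· * ((u⁻¹ : Sˣ) : S)) hz
  simpa [← hu, mul_assoc, u.mul_inv] using h4

lemma aux_exists_char [FiniteDimensional ℂ S] (s : S) :
    ∃ c : ℂ, ¬IsUnit (s - algebraMap ℂ S c) := by
  have : Algebra.IsIntegral ℂ S := Algebra.IsIntegral.of_finite ℂ S
  have hint : IsIntegral ℂ s := Algebra.IsIntegral.isIntegral s
  have hmon := minpoly.monic hint
  have hsp : Splits (minpoly ℂ s) := IsAlgClosed.splits _
  have hev : aeval s (minpoly ℂ s) = 0 := minpoly.aeval ℂ s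
  obtain ⟨l, hl0⟩ := Quotient.exists_rep (minpoly ℂ s).roots
  have hl : ((l : Multiset ℂ)) = (minpoly ℂ s).roots := hl0
  rw [hsp.eq_prod_roots_of_monic hmon, ← hl, Multiset.map_coe,
    Multiset.prod_coe, map_list_prod, List.map_map] at hev
  have key : ∀ L : List ℂ, (L.map (⇑(aeval s) ∘ fun a => X - C a)).prod = 0 →
      ∃ c ∈ L, ¬IsUnit (s - algebraMap ℂ S c) := by
    intro L
    induction L with
    | nil => intro h; rw [List.map_nil, List.prod_nil] at h; exact absurd h one_ne_zero
    | cons a L ih =>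
      intro h
      rw [List.map_cons, List.prod_cons] at h
      simp only [Function.comp_apply] at h
      by_cases hu : IsUnit ((aeval s) (X - C a))
      · rcases hu with ⟨u, hu⟩
        have hM : (L.map (⇑(aeval s) ∘ fun a => X - C a)).prod = 0 := by
          rw [← hu] at h
          have := congrArg (((u⁻¹ : Sˣ) : S) * ·) h
          simpa [← mul_assoc, u.inv_mul] using this
        obtain ⟨c, hc, hnc⟩ := ih hM
        exact ⟨c, List.mem_cons_of_mem _ hc, hnc⟩
      · refine ⟨a, List.mem_cons_self, ?_⟩
        have he : (aeval s) (X - C a) = s - algebraMap ℂ S a := by simp [map_sub]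
        rwa [he] at hu
  obtain ⟨c, -, hnu⟩ := key l hev
  exact ⟨c, hnu⟩

/-- the main reduction: a nilpotent generator gives the polynomial quotient model -/
lemma aux_poly_case {S : Type} [Ring S] [Algebra ℂ S] [FiniteDimensional ℂ S]
    (x : S) (i : ℕ) (hx : x ^ i = 0)
    (hsurj : Function.Surjective ⇑(aeval (R := ℂ) x))
    (hrank : Module.finrank ℂ S = i) :
    Nonempty (S ≃ₐ[ℂ] (ℂ[X] ⧸ Ideal.span {(X : ℂ[X]) ^ i})) := by
  have hf : (X : ℂ[X]) ^ i ≠ 0 := pow_ne_zero _ X_ne_zero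
  have h0 : ∀ p ∈ Ideal.span {(X : ℂ[X]) ^ i}, aeval x p = 0 := by
    intro p hp
    rw [Ideal.mem_span_singleton'] at hp
    obtain ⟨q, rfl⟩ := hp
    rw [map_mul, map_pow, aeval_X, hx, mul_zero]
  set Φ := Ideal.Quotient.liftₐ (Ideal.span {(X : ℂ[X]) ^ i}) (aeval x) h0 with hΦ
  have hs : Function.Surjective ⇑Φ := by
    intro s
    obtain ⟨p, rfl⟩ := hsurj s
    exact ⟨Ideal.Quotient.mk _ p, rfl⟩
  have hfd : FiniteDimensional ℂ (ℂ[X] ⧸ Ideal.span {(X : ℂ[X]) ^ i}) :=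
    Module.Finite.of_basis (AdjoinRoot.powerBasis hf).basis
  have hfr : Module.finrank ℂ (ℂ[X] ⧸ Ideal.span {(X : ℂ[X]) ^ i}) = i := by
    have h := (AdjoinRoot.powerBasis hf).finrank
    rw [AdjoinRoot.powerBasis_dim, natDegree_X_pow] at h
    exact h
  have hinj : Function.Injective ⇑Φ :=
    (LinearMap.injective_iff_surjective_of_finrank_eq_finrank
      (f := Φ.toLinearMap) (by rw [hfr, hrank])).mpr hs
  exact ⟨(AlgEquiv.ofBijective Φ ⟨hinj, hs⟩).symm⟩

end Aux

set_option maxHeartbeats 2000000 in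
theorem stmt11 (S : Type) [Ring S] [Algebra ℂ S] [FiniteDimensional ℂ S]
    [IsLocalRing S] (hdim : Module.finrank ℂ S ≤ 3) :
    (∃ i : ℕ, 1 ≤ i ∧ i ≤ 3 ∧
      Nonempty (S ≃ₐ[ℂ] (Polynomial ℂ ⧸ Ideal.span {(Polynomial.X : Polynomial ℂ) ^ i}))) ∨
    Nonempty (S ≃ₐ[ℂ]
      (MvPolynomial (Fin 2) ℂ ⧸
        (Ideal.span {MvPolynomial.X 0, MvPolynomial.X 1} : Ideal (MvPolynomial (Fin 2) ℂ)) ^ 2)) := by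
  classical
  -- the submodule of nonunits
  set N : Submodule ℂ S :=
    { carrier := {a | ¬IsUnit a}
      add_mem' := fun ha hb => aux_nonunits_add ha hb
      zero_mem' := not_isUnit_zero
      smul_mem' := fun c a ha => aux_nonunit_smul c ha } with hNdef
  have hmem : ∀ s : S, s ∈ N ↔ ¬IsUnit s := fun _ => Iff.rfl
  -- decomposition S = ℂ·1 ⊕ N
  have hsup : Submodule.span ℂ {(1 : S)} ⊔ N = ⊤ := by
    rw [eq_top_iff]
    rintro s -
    obtain ⟨c, hc⟩ := aux_exists_char s
    refine Submodule.mem_sup.mpr ⟨algebraMap ℂ S c, ?_, s - algebraMap ℂ S c, hc, by abel⟩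
    exact Submodule.mem_span_singleton.mpr ⟨c, (Algebra.algebraMap_eq_smul_one c).symm⟩
  have hinf : Submodule.span ℂ {(1 : S)} ⊓ N = ⊥ := by
    rw [eq_bot_iff]
    rintro z ⟨hz1, hz2⟩
    obtain ⟨c, rfl⟩ := Submodule.mem_span_singleton.mp hz1
    rcases eq_or_ne c 0 with rfl | hc
    · simp
    · exact absurd ((hmem _).mp hz2)
        (not_not.mpr (by rw [← Algebra.algebraMap_eq_smul_one]; exact aux_isUnit_algebraMap hc))
  have hfin : Module.finrank ℂ S = 1 + Module.finrank ℂ ↥N := by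
    have h := Submodule.finrank_sup_add_finrank_inf_eq (Submodule.span ℂ {(1 : S)}) N
    rw [hsup, hinf, finrank_top, finrank_bot, add_zero,
      finrank_span_singleton (one_ne_zero : (1 : S) ≠ 0)] at h
    exact h
  have hn2 : Module.finrank ℂ ↥N ≤ 2 := by omega
  -- coordinates of products
  have hNmul : ∀ a ∈ N, ∀ b ∈ N, a * b ∈ N := fun a ha b hb =>
    (hmem _).mpr (aux_nonunit_mul_left a ((hmem _).mp hb))
  rcases Nat.lt_or_ge (Module.finrank ℂ ↥N) 1 with h0 | h1
  ----------------------------------------------------------------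
  · -- finrank N = 0 : S ≅ ℂ[X]/(X)
    have hn0 : Module.finrank ℂ ↥N = 0 := by omega
    have hN0 : N = ⊥ := Submodule.finrank_eq_zero.mp hn0
    left
    refine ⟨1, le_refl 1, by norm_num, ?_⟩
    refine aux_poly_case (0 : S) 1 (by simp) ?_ (by omega)
    intro s
    have hs : s ∈ Submodule.span ℂ {(1 : S)} := by
      have : s ∈ (⊤ : Submodule ℂ S) := trivial
      rwa [← hsup, hN0, sup_bot_eq] at this
    obtain ⟨c, hc⟩ := Submodule.mem_span_singleton.mp hs
    exact ⟨C c, by rw [aeval_C, Algebra.algebraMap_eq_smul_one]; exact hc⟩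
  rcases Nat.lt_or_ge (Module.finrank ℂ ↥N) 2 with h1' | h2
  ----------------------------------------------------------------
  · -- finrank N = 1 : S ≅ ℂ[X]/(X²)
    have hn1 : Module.finrank ℂ ↥N = 1 := by omega
    let b : Module.Basis (Fin 1) ℂ ↥N := (Module.finBasis ℂ ↥N).reindex (finCongr hn1)
    set x : S := ((b 0 : ↥N) : S) with hxdef
    have hxN : x ∈ N := (b 0).2
    have hx0 : x ≠ 0 := by
      simpa [hxdef] using (b.ne_zero 0)
    have hco : ∀ nn, nn ∈ N → ∃ c : ℂ, c • x = nn := by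
      intro nn hn
      have hs := b.sum_repr ⟨nn, hn⟩
      rw [Fin.sum_univ_one] at hs
      exact ⟨b.repr ⟨nn, hn⟩ 0, by simpa using congrArg Subtype.val hs⟩
    -- x² = 0
    obtain ⟨c, hc⟩ := hco (x * x) (hNmul x hxN x hxN)
    have hcc : c = 0 := by
      by_contra hc0
      exact hx0 (aux_sq_eq_smul ((hmem _).mp hxN) hc.symm hc0)
    have hx2 : x * x = 0 := by rw [← hc, hcc, zero_smul]
    left
    refine ⟨2, by norm_num, by norm_num, ?_⟩
    refine aux_poly_case x 2 (by rw [pow_two]; exact hx2) ?_ (by omega)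
    intro s
    have hs : s ∈ Submodule.span ℂ {(1 : S)} ⊔ N := by rw [hsup]; trivial
    obtain ⟨k, hk, n, hn, rfl⟩ := Submodule.mem_sup.mp hs
    obtain ⟨ck, hck⟩ := Submodule.mem_span_singleton.mp hk
    obtain ⟨cn, hcn⟩ := hco n hn
    refine ⟨C ck + C cn * X, ?_⟩
    rw [map_add, map_mul, aeval_C, aeval_C, aeval_X, Algebra.algebraMap_eq_smul_one,
      Algebra.algebraMap_eq_smul_one, smul_mul_assoc, one_mul, hck, hcn]
  ----------------------------------------------------------------
  · -- finrank N = 2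
    have hn2' : Module.finrank ℂ ↥N = 2 := by omega
    let b : Module.Basis (Fin 2) ℂ ↥N := (Module.finBasis ℂ ↥N).reindex (finCongr hn2')
    set xx : S := ((b 0 : ↥N) : S) with hxdef
    set yy : S := ((b 1 : ↥N) : S) with hydef
    have hxN : xx ∈ N := (b 0).2
    have hyN : yy ∈ N := (b 1).2
    have hco : ∀ nn, nn ∈ N → ∃ a c : ℂ, a • xx + c • yy = nn := by
      intro nn hn
      have hs := b.sum_repr ⟨nn, hn⟩
      rw [Fin.sum_univ_two] at hs
      exact ⟨b.repr ⟨nn, hn⟩ 0, b.repr ⟨nn, hn⟩ 1, by simpa using congrArg Subtype.val hs⟩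
    have hr2 : ∀ u v : S, Set.range ![u, v] = {u, v} := by
      intro u v; ext z
      simp [Fin.exists_fin_two, or_comm]
    by_cases hP : ∀ a ∈ N, ∀ b' ∈ N, a * b' = 0
    · -- square-zero case : ℂ[x,y]/(x,y)²
      right
      have l1 : ∀ (r : ℂ) (z : S), algebraMap ℂ S r * z = r • z := fun r z =>
        (Algebra.smul_def r z).symm
      have l2 : ∀ (r : ℂ) (z : S), z * algebraMap ℂ S r = r • z := fun r z => by
        rw [← Algebra.commutes]; exact (Algebra.smul_def r z).symm
      have hcomm : ∀ p q : S, p * q = q * p := by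
        intro p q
        obtain ⟨c, hc⟩ := aux_exists_char p
        obtain ⟨d, hd⟩ := aux_exists_char q
        have hpq : (p - algebraMap ℂ S c) * (q - algebraMap ℂ S d) = 0 := hP _ hc _ hd
        have hqp : (q - algebraMap ℂ S d) * (p - algebraMap ℂ S c) = 0 := hP _ hd _ hc
        set np := p - algebraMap ℂ S c with hnp
        set nq := q - algebraMap ℂ S d with hnq
        have hp : p = algebraMap ℂ S c + np := by rw [hnp]; abel
        have hq : q = algebraMap ℂ S d + nq := by rw [hnq]; abel
        have l3 : ∀ e f : ℂ, e • algebraMap ℂ S f = algebraMap ℂ S (e * f) := fun e f => by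
          rw [Algebra.smul_def, ← map_mul]
        rw [hp, hq]
        simp only [mul_add, add_mul, smul_add, l1, l2, l3, hpq, hqp, add_zero]
        rw [mul_comm d c]
        abel
      letI : CommRing S := { (inferInstance : Ring S) with mul_comm := hcomm }
      let ψ : MvPolynomial (Fin 2) ℂ →ₐ[ℂ] S := MvPolynomial.aeval ![xx, yy]
      have hψx : ψ (MvPolynomial.X 0) = xx := by simp [ψ]
      have hψy : ψ (MvPolynomial.X 1) = yy := by simp [ψ]
      set I : Ideal (MvPolynomial (Fin 2) ℂ) :=
        Ideal.span {MvPolynomial.X 0, MvPolynomial.X 1} with hIdef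
      have hIN : ∀ r ∈ I, ψ r ∈ N := by
        intro r hr
        obtain ⟨p, q, hpq⟩ := Ideal.mem_span_pair.mp hr
        rw [← hpq, map_add, map_mul, map_mul, hψx, hψy]
        exact N.add_mem ((hmem _).mpr (aux_nonunit_mul_left _ ((hmem _).mp hxN)))
          ((hmem _).mpr (aux_nonunit_mul_left _ ((hmem _).mp hyN)))
      have hker : ∀ p ∈ I ^ 2, ψ p = 0 := by
        have hle : I * I ≤ RingHom.ker ψ.toRingHom := Ideal.mul_le.mpr fun r hr t ht => by
          rw [RingHom.mem_ker]
          show ψ (r * t) = 0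
          rw [map_mul]
          exact hP _ (hIN r hr) _ (hIN t ht)
        intro p hp
        rw [pow_two] at hp
        exact hle hp
      let Φ : (MvPolynomial (Fin 2) ℂ ⧸ I ^ 2) →ₐ[ℂ] S := Ideal.Quotient.liftₐ (I ^ 2) ψ hker
      have hΦmk : ∀ p, Φ (Ideal.Quotient.mk (I ^ 2) p) = ψ p := fun p => rfl
      have hsurj : Function.Surjective ⇑Φ := by
        intro s
        obtain ⟨c, hc⟩ := aux_exists_char s
        obtain ⟨ca, cb, hcab⟩ := hco (s - algebraMap ℂ S c) hc
        refine ⟨Ideal.Quotient.mk (I ^ 2) (MvPolynomial.C c + (MvPolynomial.C ca * MvPolynomial.X 0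
          + MvPolynomial.C cb * MvPolynomial.X 1)), ?_⟩
        rw [hΦmk, map_add, map_add, map_mul, map_mul, hψx, hψy, MvPolynomial.aeval_C,
          MvPolynomial.aeval_C, MvPolynomial.aeval_C, l1, l1, hcab, add_sub_cancel]
      let v : Fin 3 → (MvPolynomial (Fin 2) ℂ ⧸ I ^ 2) :=
        ![1, Ideal.Quotient.mk (I ^ 2) (MvPolynomial.X 0),
          Ideal.Quotient.mk (I ^ 2) (MvPolynomial.X 1)]
      have hXmem : ∀ i j : Fin 2,
          (MvPolynomial.X i * MvPolynomial.X j : MvPolynomial (Fin 2) ℂ) ∈ I ^ 2 := by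
        intro i j
        rw [pow_two]
        refine Ideal.mul_mem_mul ?_ ?_
        · apply Ideal.subset_span; fin_cases i
          · exact Set.mem_insert _ _
          · exact Set.mem_insert_of_mem _ rfl
        · apply Ideal.subset_span; fin_cases j
          · exact Set.mem_insert _ _
          · exact Set.mem_insert_of_mem _ rfl
      have hspan : ∀ z : MvPolynomial (Fin 2) ℂ ⧸ I ^ 2, z ∈ Submodule.span ℂ (Set.range v) := by
        intro z
        obtain ⟨p, rfl⟩ := Ideal.Quotient.mk_surjective z
        induction p using MvPolynomial.induction_on with
        | C a =>
          have h1 : (Ideal.Quotient.mk (I ^ 2)) (MvPolynomial.C a) = a • v 0 := by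
            show (Ideal.Quotient.mkₐ ℂ (I ^ 2)) (MvPolynomial.C a) = a • 1
            rw [← MvPolynomial.algebraMap_eq, AlgHom.commutes, Algebra.algebraMap_eq_smul_one]
          rw [h1]
          exact Submodule.smul_mem _ _ (Submodule.subset_span ⟨0, rfl⟩)
        | add p q hp hq => rw [map_add]; exact Submodule.add_mem _ hp hq
        | mul_X p i hp =>
          rw [map_mul]
          refine Submodule.span_induction ?_ ?_ ?_ ?_ hp
          · intro w hw
            obtain ⟨j, rfl⟩ := hw
            fin_cases j
            · show (1 : MvPolynomial (Fin 2) ℂ ⧸ I ^ 2) *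
                  (Ideal.Quotient.mk (I ^ 2)) (MvPolynomial.X i) ∈ _
              rw [one_mul]
              refine Submodule.subset_span ?_
              fin_cases i
              · exact ⟨1, rfl⟩
              · exact ⟨2, rfl⟩
            · show (Ideal.Quotient.mk (I ^ 2)) (MvPolynomial.X 0) *
                  (Ideal.Quotient.mk (I ^ 2)) (MvPolynomial.X i) ∈ _
              rw [← map_mul, Ideal.Quotient.eq_zero_iff_mem.mpr (hXmem 0 i)]
              exact Submodule.zero_mem _
            · show (Ideal.Quotient.mk (I ^ 2)) (MvPolynomial.X 1) *
                  (Ideal.Quotient.mk (I ^ 2)) (MvPolynomial.X i) ∈ _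
              rw [← map_mul, Ideal.Quotient.eq_zero_iff_mem.mpr (hXmem 1 i)]
              exact Submodule.zero_mem _
          · rw [zero_mul]; exact Submodule.zero_mem _
          · intro y z _ _ ihy ihz
            rw [add_mul]; exact Submodule.add_mem _ ihy ihz
          · intro c y _ ih
            rw [smul_mul_assoc]; exact Submodule.smul_mem _ _ ih
      have hspan' : Submodule.span ℂ (Set.range v) = ⊤ := eq_top_iff.mpr fun z _ => hspan z
      have hfd : FiniteDimensional ℂ (MvPolynomial (Fin 2) ℂ ⧸ I ^ 2) :=
        ⟨hspan' ▸ Submodule.fg_span (Set.finite_range v)⟩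
      have hQ3 : Module.finrank ℂ (MvPolynomial (Fin 2) ℂ ⧸ I ^ 2) ≤ 3 := by
        simpa using finrank_le_of_span_eq_top hspan'
      have hSQ : Module.finrank ℂ S ≤ Module.finrank ℂ (MvPolynomial (Fin 2) ℂ ⧸ I ^ 2) := by
        have h := LinearMap.finrank_range_le Φ.toLinearMap
        rwa [LinearMap.range_eq_top.mpr (show Function.Surjective ⇑Φ.toLinearMap from hsurj),
          finrank_top] at h
      have heqr : Module.finrank ℂ (MvPolynomial (Fin 2) ℂ ⧸ I ^ 2) = Module.finrank ℂ S := by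
        omega
      have hinj : Function.Injective ⇑Φ :=
        (LinearMap.injective_iff_surjective_of_finrank_eq_finrank
          (f := Φ.toLinearMap) heqr).mpr hsurj
      exact ⟨(AlgEquiv.ofBijective Φ ⟨hinj, hsurj⟩).symm⟩
    · -- there is x with x² ≠ 0 : ℂ[X]/(X³)
      left
      push_neg at hP
      obtain ⟨a, haN, b', hbN, hab⟩ := hP
      have hsq : ∃ z ∈ N, z * z ≠ 0 := by
        by_contra hsqn
        push_neg at hsqn
        have ha2 : a * a = 0 := hsqn a haN
        have hb2 : b' * b' = 0 := hsqn b' hbN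
        have hsum : a * b' + b' * a = 0 := by
          have h := hsqn (a + b') (N.add_mem haN hbN)
          rw [add_mul, mul_add, mul_add, ha2, hb2, zero_add, add_zero] at h
          exact h
        have hane : a ≠ 0 := by rintro rfl; rw [zero_mul] at hab; exact hab rfl
        have hbne : b' ≠ 0 := by rintro rfl; rw [mul_zero] at hab; exact hab rfl
        have hli : LinearIndependent ℂ ![a, b'] := by
          rw [LinearIndependent.pair_iff]
          intro s t hst
          have h1 := congrArg (· * b') hst
          simp only [add_mul, smul_mul_assoc, zero_mul] at h1
          rw [hb2, smul_zero, add_zero] at h1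
          have hs0 : s = 0 := by
            rcases smul_eq_zero.mp h1 with h | h
            · exact h
            · exact absurd h hab
          subst hs0
          rw [zero_smul, zero_add] at hst
          rcases smul_eq_zero.mp hst with h | h
          · exact ⟨rfl, h⟩
          · exact absurd h hbne
        have hspanN : Submodule.span ℂ {a, b'} = N := by
          apply Submodule.eq_of_le_of_finrank_le
          · rw [Submodule.span_le]
            rintro z (rfl | rfl)
            · exact haN
            · exact hbN
          · rw [hn2']
            have hc := finrank_span_eq_card hli
            rw [hr2 a b'] at hc
            rw [hc, Fintype.card_fin]
        have habN : a * b' ∈ N := hNmul a haN b' hbN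
        obtain ⟨st, tt, hstt⟩ := Submodule.mem_span_pair.mp
          (show a * b' ∈ Submodule.span ℂ {a, b'} by rw [hspanN]; exact habN)
        have htt : tt = 0 := by
          have h1 := congrArg (a * ·) hstt
          simp only [mul_add, mul_smul_comm] at h1
          rw [ha2, smul_zero, zero_add, ← mul_assoc, ha2, zero_mul] at h1
          rcases smul_eq_zero.mp h1 with h | h
          · exact h
          · exact absurd h hab
        have hss : st = 0 := by
          have h1 := congrArg (· * b') hstt
          simp only [add_mul, smul_mul_assoc] at h1
          rw [htt, zero_smul, add_zero, mul_assoc, hb2, mul_zero] at h1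
          rcases smul_eq_zero.mp h1 with h | h
          · exact h
          · exact absurd h hab
        rw [htt, hss, zero_smul, zero_smul, add_zero] at hstt
        exact hab hstt.symm
      obtain ⟨x, hxN', hx2⟩ := hsq
      have hx0 : x ≠ 0 := fun h => hx2 (by rw [h, mul_zero])
      have hxnu : ¬IsUnit x := (hmem _).mp hxN'
      have hx2N : x * x ∈ N := hNmul x hxN' x hxN'
      have hli : LinearIndependent ℂ ![x, x * x] := by
        rw [LinearIndependent.pair_iff]
        intro s t hst
        rcases eq_or_ne t 0 with rfl | ht
        · rw [zero_smul, add_zero] at hst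
          rcases smul_eq_zero.mp hst with h | h
          · exact ⟨h, rfl⟩
          · exact absurd h hx0
        · exfalso
          rcases eq_or_ne s 0 with rfl | hs
          · rw [zero_smul, zero_add] at hst
            rcases smul_eq_zero.mp hst with h | h
            · exact ht h
            · exact hx2 h
          · have h' : t • (x * x) = (-s) • x := by
              rw [neg_smul]
              exact eq_neg_of_add_eq_zero_right hst
            have hxx : x * x = (-(s / t)) • x := by
              calc x * x = t⁻¹ • (t • (x * x)) := by
                    rw [smul_smul, inv_mul_cancel₀ ht, one_smul]
                _ = t⁻¹ • ((-s) • x) := by rw [h']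
                _ = (-(s / t)) • x := by
                    rw [smul_smul]
                    congr 1
                    field_simp
            have hc0 : -(s / t) ≠ 0 := neg_ne_zero.mpr (div_ne_zero hs ht)
            exact hx0 (aux_sq_eq_smul hxnu hxx hc0)
      have hspanN : Submodule.span ℂ {x, x * x} = N := by
        apply Submodule.eq_of_le_of_finrank_le
        · rw [Submodule.span_le]
          rintro z (rfl | rfl)
          · exact hxN'
          · exact hx2N
        · rw [hn2']
          have hc := finrank_span_eq_card hli
          rw [hr2 x (x * x)] at hc
          rw [hc, Fintype.card_fin]
      have hx3N : (x * x) * x ∈ N := hNmul _ hx2N x hxN'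
      obtain ⟨s1, t1, hst⟩ := Submodule.mem_span_pair.mp
        (show (x * x) * x ∈ Submodule.span ℂ {x, x * x} by rw [hspanN]; exact hx3N)
      have hs1 : s1 = 0 := by
        by_contra hs0
        have hw : ¬IsUnit (x * x - t1 • x) := (hmem _).mp (N.sub_mem hx2N (N.smul_mem t1 hxN'))
        have hu : IsUnit (x * x - t1 • x - algebraMap ℂ S s1) := aux_unit_sub hw hs0
        have hz : x * (x * x - t1 • x - algebraMap ℂ S s1) = 0 := by
          rw [mul_sub, mul_sub, ← Algebra.commutes s1 x, ← Algebra.smul_def, mul_smul_comm,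
            ← mul_assoc, ← hst]
          abel
        rcases hu with ⟨u, hu⟩
        rw [← hu] at hz
        exact hx0 (aux_unit_cancel_right u hz)
      have ht1 : t1 = 0 := by
        by_contra ht0
        rw [hs1, zero_smul, zero_add] at hst
        have hu : IsUnit (x - algebraMap ℂ S t1) := aux_unit_sub hxnu ht0
        have hz : (x - algebraMap ℂ S t1) * (x * x) = 0 := by
          rw [sub_mul, ← Algebra.smul_def, ← mul_assoc, ← hst, sub_self]
        rcases hu with ⟨u, hu⟩
        rw [← hu] at hz
        exact hx2 (aux_unit_cancel_left u hz)
      have hx3 : x ^ 3 = 0 := by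
        rw [hs1, ht1, zero_smul, zero_smul, add_zero] at hst
        rw [pow_succ, pow_two]
        exact hst.symm
      refine ⟨3, by norm_num, le_refl 3, ?_⟩
      refine aux_poly_case x 3 hx3 ?_ (by omega)
      intro s
      have hs : s ∈ Submodule.span ℂ {(1 : S)} ⊔ N := by rw [hsup]; trivial
      obtain ⟨k, hk, n, hn, rfl⟩ := Submodule.mem_sup.mp hs
      obtain ⟨ck, hck⟩ := Submodule.mem_span_singleton.mp hk
      obtain ⟨ca, cb, hcab⟩ := Submodule.mem_span_pair.mp
        (show n ∈ Submodule.span ℂ {x, x * x} by rw [hspanN]; exact hn)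
      refine ⟨C ck + (C ca * X + C cb * X ^ 2), ?_⟩
      rw [map_add, map_add, map_mul, map_mul, aeval_C, aeval_C, aeval_C, aeval_X, map_pow,
        aeval_X, Algebra.algebraMap_eq_smul_one, Algebra.algebraMap_eq_smul_one,
        Algebra.algebraMap_eq_smul_one, smul_mul_assoc, smul_mul_assoc, one_mul, one_mul,
        pow_two, hck, hcab]
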